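/- Let b₁ < b₂ be real numbers, let h > 0, and let B = { x + iy : x ∈ [b₁, b₂], y ∈ [-h, 0] } be the closed rectangle in ℂ with vertices b₁, b₂, β₁ = b₁ - ih, β₂ = b₂ - ih. Let z ∈ ℂ satisfy Im(z) ∉ [-h, 0] and |z - ((b₁+b₂)/2 - ih/2)| ≤ √(((b₂-b₁)/2)² + (h/2)²) (i.e. z is enclosed by the circumcircle of B). Define (α₁, α₂) = (b₁ - z, b₂ - z) if Im(z) > 0 and (α₁, α₂) = (β₁ - z, β₂ - z) otherwise, and set p* = (|α₁|/α₁ + |α₂|/α₂)/(|α₁| + |α₂|). Then inf_{p∈ℂ} max_{λ∈B} |1 - (λ - z)p| = |α₁ - α₂|/(|α₁| + |α₂|), and this value is attained at p = p*, i.e. max_{λ∈B} |1 - (λ - z)p*| = |α₁ - α₂|/(|α₁| + |α₂|). -/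

import Mathlib

open Complex

private lemma key_real (a b y h r₁ r₂ : ℝ) (hy : 0 < y) (hh : 0 < h)
    (e₁ : r₁^2 = a^2 + y^2) (e₂ : r₂^2 = b^2 + y^2) (h1 : 0 < r₁) (h2 : 0 < r₂)
    (hcirc : a*b + y^2 + h*y ≤ 0) :
    ((r₁+r₂)*(a*b - y^2) - a*(a*r₂+b*r₁) + (y+h)*(r₁+r₂)*y)^2
      + ((y+h)*(a*r₂+b*r₁) - (r₁+r₂)*b*y)^2 ≤ (b-a)^2*(r₁^2*r₂^2) := by
  have hN : 0 < r₁ * r₂ := mul_pos h1 h2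
  have hNt : (r₁*r₂)^2 = (a*b+y^2)^2 + y^2*(b-a)^2 := by
    linear_combination r₂^2 * e₁ + (a^2+y^2) * e₂
  have hNtpos : 0 ≤ r₁*r₂ + (a*b+y^2) := by nlinarith [sq_nonneg (y*(b-a))]
  have hts : a*b + y^2 ≤ -(h*y) := by linarith
  have step2 : (r₁*r₂ + (a*b+y^2))*(2*y^2 - (a*b+y^2)) ≤ y^2*(r₁+r₂)^2 := by
    have hid : y^2*(r₁+r₂)^2 - (r₁*r₂ + (a*b+y^2))*(2*y^2 - (a*b+y^2))
        = (r₁*r₂)*(r₁*r₂ + (a*b+y^2)) := by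
      linear_combination (-r₂^2 + y^2) * e₁ + (-(a^2)) * e₂
    nlinarith [mul_nonneg hN.le hNtpos]
  have step3 : (r₁*r₂ + (a*b+y^2))*(2*y+h) ≤ y*(r₁+r₂)^2 := by
    have h2' : (r₁*r₂ + (a*b+y^2))*(2*y^2 + h*y) ≤ (r₁*r₂ + (a*b+y^2))*(2*y^2 - (a*b+y^2)) :=
      mul_le_mul_of_nonneg_left (by linarith) hNtpos
    have hmul : y * ((r₁*r₂ + (a*b+y^2))*(2*y+h)) ≤ y * (y*(r₁+r₂)^2) := by nlinarith
    exact le_of_mul_le_mul_left hmul hy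
  have h_id : ((r₁+r₂)*(a*b - y^2) - a*(a*r₂+b*r₁) + (y+h)*(r₁+r₂)*y)^2
      + ((y+h)*(a*r₂+b*r₁) - (r₁+r₂)*b*y)^2 - (b-a)^2*(r₁^2*r₂^2)
      = 2*(r₁*r₂)*h*((r₁*r₂ + (a*b+y^2))*(2*y+h) - y*(r₁+r₂)^2) := by
    linear_combination (-2*h^2*r₂^2 + 2*y*h*r₁*r₂ + y^2*h^2 - b^2*r₂^2 + b^2*h^2 + 2*a*b*r₂^2 - a^2*r₂^2) * e₁
      + (2*y*h*r₁*r₂ - y^2*h^2 - a^2*h^2) * e₂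
  have hfin : 2*(r₁*r₂)*h*((r₁*r₂ + (a*b+y^2))*(2*y+h) - y*(r₁+r₂)^2) ≤ 0 :=
    mul_nonpos_of_nonneg_of_nonpos (by positivity) (by linarith)
  linarith

private lemma norm_sq_ri (w : ℂ) : ‖w‖^2 = w.re^2 + w.im^2 := by
  rw [Complex.sq_norm, Complex.normSq_apply]; ring

private lemma corner_bound (a b y h : ℝ) (hy : 0 < y) (hh : 0 < h)
    (hcirc : a*b + y^2 + h*y ≤ 0)
    (α₁ α₂ p : ℂ) (hα₁ : α₁ = (a:ℂ) - (y:ℂ)*Complex.I) (hα₂ : α₂ = (b:ℂ) - (y:ℂ)*Complex.I)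
    (hp : p = ((‖α₁‖:ℂ)/α₁ + (‖α₂‖:ℂ)/α₂)/((‖α₁‖:ℂ)+(‖α₂‖:ℂ))) :
    ‖1 - ((a:ℂ) - ((y+h:ℝ):ℂ)*Complex.I)*p‖ ≤ ‖α₁ - α₂‖/(‖α₁‖+‖α₂‖) := by
  have e₁ : ‖α₁‖^2 = a^2 + y^2 := by rw [hα₁, norm_sq_ri]; simp
  have e₂ : ‖α₂‖^2 = b^2 + y^2 := by rw [hα₂, norm_sq_ri]; simp
  have hα₁0 : α₁ ≠ 0 := by
    rw [hα₁]; intro hc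
    have := congrArg Complex.im hc
    simp at this; linarith
  have hα₂0 : α₂ ≠ 0 := by
    rw [hα₂]; intro hc
    have := congrArg Complex.im hc
    simp at this; linarith
  have h1 : 0 < ‖α₁‖ := norm_pos_iff.mpr hα₁0
  have h2 : 0 < ‖α₂‖ := norm_pos_iff.mpr hα₂0
  have hs : (0:ℝ) < ‖α₁‖ + ‖α₂‖ := by linarith
  have hsC : ((‖α₁‖:ℂ)+(‖α₂‖:ℂ)) ≠ 0 := by
    rw [← Complex.ofReal_add, Complex.ofReal_ne_zero]; linarith
  have hD0 : α₁*α₂*((‖α₁‖:ℂ)+(‖α₂‖:ℂ)) ≠ 0 := mul_ne_zero (mul_ne_zero hα₁0 hα₂0) hsC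
  set v : ℂ := (a:ℂ) - ((y+h:ℝ):ℂ)*Complex.I with hv
  set num : ℂ := α₁*α₂*((‖α₁‖:ℂ)+(‖α₂‖:ℂ)) - v*((‖α₁‖:ℂ)*α₂ + (‖α₂‖:ℂ)*α₁) with hnum
  have hp' : p = ((‖α₁‖:ℂ)*α₂ + (‖α₂‖:ℂ)*α₁) / (α₁*α₂*((‖α₁‖:ℂ)+(‖α₂‖:ℂ))) := by
    rw [hp, div_add_div _ _ hα₁0 hα₂0, div_div]; ring_nf
  have hps : p * (α₁*α₂*((‖α₁‖:ℂ)+(‖α₂‖:ℂ))) = (‖α₁‖:ℂ)*α₂ + (‖α₂‖:ℂ)*α₁ := by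
    rw [hp', div_mul_cancel₀ _ hD0]
  have hfac : 1 - v*p = num / (α₁*α₂*((‖α₁‖:ℂ)+(‖α₂‖:ℂ))) := by
    rw [eq_div_iff hD0, hnum]
    calc (1 - v*p) * (α₁*α₂*((‖α₁‖:ℂ)+(‖α₂‖:ℂ)))
        = α₁*α₂*((‖α₁‖:ℂ)+(‖α₂‖:ℂ)) - v*(p * (α₁*α₂*((‖α₁‖:ℂ)+(‖α₂‖:ℂ)))) := by ring
      _ = _ := by rw [hps]
  have hnorm : ‖1 - v*p‖ = ‖num‖/(‖α₁‖*‖α₂‖*(‖α₁‖+‖α₂‖)) := by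
    rw [hfac, norm_div, norm_mul, norm_mul, ← Complex.ofReal_add, Complex.norm_real,
      Real.norm_eq_abs, abs_of_pos hs]
  have hre : num.re = (‖α₁‖+‖α₂‖)*(a*b - y^2) - a*(a*‖α₂‖+b*‖α₁‖) + (y+h)*(‖α₁‖+‖α₂‖)*y := by
    rw [hnum, hα₁, hα₂, hv]
    simp [Complex.mul_re, Complex.mul_im, Complex.sub_re, Complex.sub_im, Complex.add_re,
      Complex.add_im]
    ring
  have him : num.im = (y+h)*(a*‖α₂‖+b*‖α₁‖) - (‖α₁‖+‖α₂‖)*b*y := by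
    rw [hnum, hα₁, hα₂, hv]
    simp [Complex.mul_re, Complex.mul_im, Complex.sub_re, Complex.sub_im, Complex.add_re,
      Complex.add_im]
    ring
  have key := key_real a b y h ‖α₁‖ ‖α₂‖ hy hh e₁ e₂ h1 h2 hcirc
  have hd : ‖α₁ - α₂‖ = |a - b| := by
    rw [hα₁, hα₂, show (a:ℂ) - (y:ℂ)*Complex.I - ((b:ℂ) - (y:ℂ)*Complex.I) = ((a-b:ℝ):ℂ) by
      push_cast; ring, Complex.norm_real, Real.norm_eq_abs]
  have hnum_le : ‖num‖ ≤ ‖α₁ - α₂‖ * (‖α₁‖*‖α₂‖) := by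
    have hc0 : 0 ≤ ‖α₁ - α₂‖ * (‖α₁‖*‖α₂‖) := by positivity
    have h' : ‖num‖^2 ≤ (‖α₁ - α₂‖ * (‖α₁‖*‖α₂‖))^2 := by
      have he : (‖α₁ - α₂‖ * (‖α₁‖*‖α₂‖))^2 = (b-a)^2*(‖α₁‖^2*‖α₂‖^2) := by
        rw [hd, mul_pow, _root_.sq_abs]; ring
      rw [norm_sq_ri, hre, him, he]
      exact key
    nlinarith [norm_nonneg num]
  rw [hnorm]
  calc ‖num‖/(‖α₁‖*‖α₂‖*(‖α₁‖+‖α₂‖)) ≤ (‖α₁ - α₂‖*(‖α₁‖*‖α₂‖))/(‖α₁‖*‖α₂‖*(‖α₁‖+‖α₂‖)) := by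
        gcongr
    _ = ‖α₁ - α₂‖/(‖α₁‖+‖α₂‖) := by
        rw [show ‖α₁ - α₂‖*(‖α₁‖*‖α₂‖) = (‖α₁‖*‖α₂‖)*‖α₁ - α₂‖ by ring,
          show ‖α₁‖*‖α₂‖*(‖α₁‖+‖α₂‖) = (‖α₁‖*‖α₂‖)*(‖α₁‖+‖α₂‖) by ring,
          mul_div_mul_left _ _ (by positivity : (‖α₁‖*‖α₂‖) ≠ 0)]

private lemma vertex_eq (α₁ α₂ p : ℂ) (hα₁0 : α₁ ≠ 0) (hα₂0 : α₂ ≠ 0)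
    (hp : p = ((‖α₁‖:ℂ)/α₁ + (‖α₂‖:ℂ)/α₂)/((‖α₁‖:ℂ)+(‖α₂‖:ℂ))) :
    ‖1 - α₁*p‖ = ‖α₁ - α₂‖/(‖α₁‖+‖α₂‖) := by
  have h1 : 0 < ‖α₁‖ := norm_pos_iff.mpr hα₁0
  have h2 : 0 < ‖α₂‖ := norm_pos_iff.mpr hα₂0
  have hs : (0:ℝ) < ‖α₁‖ + ‖α₂‖ := by linarith
  have hsC : ((‖α₁‖:ℂ)+(‖α₂‖:ℂ)) ≠ 0 := by
    rw [← Complex.ofReal_add, Complex.ofReal_ne_zero]; linarith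
  have hD0 : α₂*((‖α₁‖:ℂ)+(‖α₂‖:ℂ)) ≠ 0 := mul_ne_zero hα₂0 hsC
  have hDD : α₁*α₂*((‖α₁‖:ℂ)+(‖α₂‖:ℂ)) ≠ 0 := mul_ne_zero (mul_ne_zero hα₁0 hα₂0) hsC
  have hp' : p = ((‖α₁‖:ℂ)*α₂ + (‖α₂‖:ℂ)*α₁) / (α₁*α₂*((‖α₁‖:ℂ)+(‖α₂‖:ℂ))) := by
    rw [hp, div_add_div _ _ hα₁0 hα₂0, div_div]; ring_nf
  have hps : p * (α₁*α₂*((‖α₁‖:ℂ)+(‖α₂‖:ℂ))) = (‖α₁‖:ℂ)*α₂ + (‖α₂‖:ℂ)*α₁ := by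
    rw [hp', div_mul_cancel₀ _ hDD]
  have h3 : (1 - α₁*p) * (α₂*((‖α₁‖:ℂ)+(‖α₂‖:ℂ))) * α₁ = (‖α₂‖:ℂ)*(α₂ - α₁) * α₁ := by
    calc (1 - α₁*p) * (α₂*((‖α₁‖:ℂ)+(‖α₂‖:ℂ))) * α₁
        = α₁*α₂*((‖α₁‖:ℂ)+(‖α₂‖:ℂ)) - α₁*(p*(α₁*α₂*((‖α₁‖:ℂ)+(‖α₂‖:ℂ)))) := by ring
      _ = _ := by rw [hps]; ring
  have hfac : 1 - α₁*p = (‖α₂‖:ℂ)*(α₂ - α₁) / (α₂*((‖α₁‖:ℂ)+(‖α₂‖:ℂ))) := by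
    rw [eq_div_iff hD0]
    exact mul_right_cancel₀ hα₁0 h3
  rw [hfac, norm_div, norm_mul, norm_mul, ← Complex.ofReal_add, Complex.norm_real,
    Complex.norm_real, Real.norm_eq_abs, Real.norm_eq_abs, abs_of_pos hs, abs_of_pos h2,
    norm_sub_rev]
  rw [show ‖α₂‖*‖α₁-α₂‖/(‖α₂‖*(‖α₁‖+‖α₂‖)) = ‖α₂‖*‖α₁-α₂‖/(‖α₂‖*(‖α₁‖+‖α₂‖)) from rfl,
    mul_div_mul_left _ _ (ne_of_gt h2)]

private lemma lower_two (α₁ α₂ p : ℂ) (hα₁0 : α₁ ≠ 0) (hα₂0 : α₂ ≠ 0) :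
    ‖α₁ - α₂‖/(‖α₁‖+‖α₂‖) ≤ max ‖1-α₁*p‖ ‖1-α₂*p‖ := by
  have h1 : 0 < ‖α₁‖ := norm_pos_iff.mpr hα₁0
  have h2 : 0 < ‖α₂‖ := norm_pos_iff.mpr hα₂0
  have hs : (0:ℝ) < ‖α₁‖ + ‖α₂‖ := by linarith
  rw [div_le_iff₀ hs]
  have hid : α₁ - α₂ = α₁*(1-α₂*p) - α₂*(1-α₁*p) := by ring
  calc ‖α₁ - α₂‖ = ‖α₁*(1-α₂*p) - α₂*(1-α₁*p)‖ := by rw [← hid]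
    _ ≤ ‖α₁*(1-α₂*p)‖ + ‖α₂*(1-α₁*p)‖ := norm_sub_le _ _
    _ = ‖α₁‖*‖1-α₂*p‖ + ‖α₂‖*‖1-α₁*p‖ := by rw [norm_mul, norm_mul]
    _ ≤ ‖α₁‖*(max ‖1-α₁*p‖ ‖1-α₂*p‖) + ‖α₂‖*(max ‖1-α₁*p‖ ‖1-α₂*p‖) := by
        gcongr
        · exact le_max_right _ _
        · exact le_max_left _ _
    _ = (max ‖1-α₁*p‖ ‖1-α₂*p‖) * (‖α₁‖+‖α₂‖) := by ring

private lemma seg_bound (p u v : ℂ) (t : ℝ) (ht0 : 0 ≤ t) (ht1 : t ≤ 1) :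
    ‖1 - ((1-(t:ℂ))*u + (t:ℂ)*v)*p‖ ≤ max ‖1 - u*p‖ ‖1 - v*p‖ := by
  have hid : 1 - ((1-(t:ℂ))*u + (t:ℂ)*v)*p = (1-(t:ℂ))*(1 - u*p) + (t:ℂ)*(1 - v*p) := by ring
  rw [hid]
  have hn1 : ‖(1-(t:ℂ))‖ = 1 - t := by
    rw [show (1-(t:ℂ)) = ((1-t:ℝ):ℂ) by push_cast; ring, Complex.norm_real, Real.norm_eq_abs,
      _root_.abs_of_nonneg (by linarith)]
  have hn2 : ‖(t:ℂ)‖ = t := by rw [Complex.norm_real, Real.norm_eq_abs, _root_.abs_of_nonneg ht0]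
  calc ‖(1-(t:ℂ))*(1 - u*p) + (t:ℂ)*(1 - v*p)‖
      ≤ ‖(1-(t:ℂ))*(1 - u*p)‖ + ‖(t:ℂ)*(1 - v*p)‖ := norm_add_le _ _
    _ = (1-t)*‖1 - u*p‖ + t*‖1 - v*p‖ := by rw [norm_mul, norm_mul, hn1, hn2]
    _ ≤ (1-t)*(max ‖1 - u*p‖ ‖1 - v*p‖) + t*(max ‖1 - u*p‖ ‖1 - v*p‖) := by
        gcongr
        · exact le_max_left _ _
        · exact le_max_right _ _
    _ = max ‖1 - u*p‖ ‖1 - v*p‖ := by ring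

private lemma core (a b y h : ℝ) (hy : 0 < y) (hh : 0 < h) (hab : a < b)
    (hcirc : a*b + y^2 + h*y ≤ 0)
    (α₁ α₂ p : ℂ) (hα₁ : α₁ = (a:ℂ) - (y:ℂ)*Complex.I) (hα₂ : α₂ = (b:ℂ) - (y:ℂ)*Complex.I)
    (hp : p = ((‖α₁‖:ℂ)/α₁ + (‖α₂‖:ℂ)/α₂)/((‖α₁‖:ℂ)+(‖α₂‖:ℂ))) :
    (∀ w : ℂ, w.re ∈ Set.Icc a b → w.im ∈ Set.Icc (-(h+y)) (-y) →
       ‖1 - w*p‖ ≤ ‖α₁ - α₂‖/(‖α₁‖+‖α₂‖)) ∧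
    ‖1 - α₁*p‖ = ‖α₁ - α₂‖/(‖α₁‖+‖α₂‖) ∧ ‖1 - α₂*p‖ = ‖α₁ - α₂‖/(‖α₁‖+‖α₂‖) := by
  have hα₁0 : α₁ ≠ 0 := by
    rw [hα₁]; intro hc
    have := congrArg Complex.im hc
    simp at this; linarith
  have hα₂0 : α₂ ≠ 0 := by
    rw [hα₂]; intro hc
    have := congrArg Complex.im hc
    simp at this; linarith
  have hp2 : p = ((‖α₂‖:ℂ)/α₂ + (‖α₁‖:ℂ)/α₁)/((‖α₂‖:ℂ)+(‖α₁‖:ℂ)) := by rw [hp]; ring_nf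
  have hv₁ : ‖1 - α₁*p‖ = ‖α₁ - α₂‖/(‖α₁‖+‖α₂‖) := vertex_eq α₁ α₂ p hα₁0 hα₂0 hp
  have hv₂ : ‖1 - α₂*p‖ = ‖α₁ - α₂‖/(‖α₁‖+‖α₂‖) := by
    have := vertex_eq α₂ α₁ p hα₂0 hα₁0 hp2
    rwa [norm_sub_rev α₂ α₁, add_comm ‖α₂‖ ‖α₁‖] at this
  have hcorner₁ : ‖1 - ((a:ℂ) - ((y+h:ℝ):ℂ)*Complex.I)*p‖ ≤ ‖α₁ - α₂‖/(‖α₁‖+‖α₂‖) :=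
    corner_bound a b y h hy hh hcirc α₁ α₂ p hα₁ hα₂ hp
  have hcorner₂ : ‖1 - ((b:ℂ) - ((y+h:ℝ):ℂ)*Complex.I)*p‖ ≤ ‖α₁ - α₂‖/(‖α₁‖+‖α₂‖) := by
    have := corner_bound b a y h hy hh (by rw [mul_comm]; exact hcirc) α₂ α₁ p hα₂ hα₁ hp2
    rwa [norm_sub_rev α₂ α₁, add_comm ‖α₂‖ ‖α₁‖] at this
  refine ⟨?_, hv₁, hv₂⟩
  intro w hwre hwim
  obtain ⟨hwre1, hwre2⟩ := hwre
  obtain ⟨hwim1, hwim2⟩ := hwim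
  set M : ℝ := ‖α₁ - α₂‖/(‖α₁‖+‖α₂‖) with hM
  set t2 : ℝ := (w.im + (h+y))/h with ht2
  set t1 : ℝ := (w.re - a)/(b-a) with ht1
  have ht2a : 0 ≤ t2 := div_nonneg (by linarith) hh.le
  have ht2b : t2 ≤ 1 := (div_le_one hh).mpr (by linarith)
  have ht1a : 0 ≤ t1 := div_nonneg (by linarith) (by linarith)
  have ht1b : t1 ≤ 1 := (div_le_one (by linarith)).mpr (by linarith)
  set wt : ℂ := (w.re:ℂ) - (y:ℂ)*Complex.I with hwt
  set wb : ℂ := (w.re:ℂ) - ((y+h:ℝ):ℂ)*Complex.I with hwb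
  have hw : w = (1-(t2:ℂ))*wb + (t2:ℂ)*wt := by
    apply Complex.ext
    · simp [hwt, hwb, Complex.mul_re, Complex.mul_im, Complex.sub_re, Complex.sub_im]
      ring
    · simp [hwt, hwb, Complex.mul_re, Complex.mul_im, Complex.sub_re, Complex.sub_im, ht2]
      field_simp
      ring
  have hwt_dec : wt = (1-(t1:ℂ))*α₁ + (t1:ℂ)*α₂ := by
    rw [hα₁, hα₂]
    apply Complex.ext
    · simp [hwt, Complex.mul_re, Complex.mul_im, Complex.sub_re, Complex.sub_im]
      rw [ht1]
      field_simp [sub_ne_zero.mpr hab.ne']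
      ring
    · simp [hwt, Complex.mul_re, Complex.mul_im, Complex.sub_re, Complex.sub_im]
      ring
  have hwb_dec : wb = (1-(t1:ℂ))*((a:ℂ) - ((y+h:ℝ):ℂ)*Complex.I)
      + (t1:ℂ)*((b:ℂ) - ((y+h:ℝ):ℂ)*Complex.I) := by
    apply Complex.ext
    · simp [hwb, Complex.mul_re, Complex.mul_im, Complex.sub_re, Complex.sub_im]
      rw [ht1]
      field_simp [sub_ne_zero.mpr hab.ne']
      ring
    · simp [hwb, Complex.mul_re, Complex.mul_im, Complex.sub_re, Complex.sub_im]
      ring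
  have step1 : ‖1 - w*p‖ ≤ max ‖1 - wb*p‖ ‖1 - wt*p‖ := by
    have := seg_bound p wb wt t2 ht2a ht2b
    rwa [← hw] at this
  have step2 : ‖1 - wt*p‖ ≤ M := by
    have := seg_bound p α₁ α₂ t1 ht1a ht1b
    rw [← hwt_dec] at this
    exact this.trans (by rw [hv₁, hv₂]; simp)
  have step3 : ‖1 - wb*p‖ ≤ M := by
    have := seg_bound p ((a:ℂ) - ((y+h:ℝ):ℂ)*Complex.I) ((b:ℂ) - ((y+h:ℝ):ℂ)*Complex.I) t1 ht1a ht1b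
    rw [← hwb_dec] at this
    exact this.trans (max_le hcorner₁ hcorner₂)
  exact step1.trans (max_le step3 step2)

private lemma assemble (B : Set ℂ) (z : ℂ) (hBc : IsCompact B) (M : ℝ)
    (pstar : ℂ) (l₀ : ℂ) (hl₀ : l₀ ∈ B) (hl₀val : ‖1 - (l₀ - z)*pstar‖ = M)
    (hub : ∀ l ∈ B, ‖1 - (l - z)*pstar‖ ≤ M)
    (hlb : ∀ p : ℂ, ∃ l ∈ B, M ≤ ‖1 - (l - z)*p‖) :
    (⨅ p : ℂ, sSup ((fun l => ‖1 - (l - z) * p‖) '' B)) = M ∧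
    sSup ((fun l => ‖1 - (l - z) * pstar‖) '' B) = M := by
  have hne : B.Nonempty := ⟨l₀, hl₀⟩
  have hBdd : ∀ p : ℂ, BddAbove ((fun l => ‖1 - (l - z) * p‖) '' B) := fun p =>
    (hBc.image ((continuous_const.sub ((continuous_id.sub continuous_const).mul
      continuous_const)).norm)).bddAbove
  have hsup_p : ∀ p : ℂ, M ≤ sSup ((fun l => ‖1 - (l - z) * p‖) '' B) := by
    intro p
    obtain ⟨l, hl, hMl⟩ := hlb p
    exact hMl.trans (le_csSup (hBdd p) ⟨l, hl, rfl⟩)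
  have hsup_star : sSup ((fun l => ‖1 - (l - z) * pstar‖) '' B) = M :=
    le_antisymm (csSup_le (hne.image _) (by rintro x ⟨l, hl, rfl⟩; exact hub l hl))
      (hl₀val ▸ le_csSup (hBdd pstar) ⟨l₀, hl₀, rfl⟩)
  refine ⟨le_antisymm ?_ (le_ciInf hsup_p), hsup_star⟩
  exact (ciInf_le ⟨M, by rintro x ⟨p, rfl⟩; exact hsup_p p⟩ pstar).trans hsup_star.le

set_option maxHeartbeats 2000000 in
theorem richardson_optimal_rate (b₁ b₂ h : ℝ) (hb : b₁ < b₂) (hh : 0 < h)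
    (B : Set ℂ) (hB : B = {w : ℂ | w.re ∈ Set.Icc b₁ b₂ ∧ w.im ∈ Set.Icc (-h) 0})
    (β₁ β₂ : ℂ) (hβ₁ : β₁ = (b₁ : ℂ) - (h : ℂ) * Complex.I)
    (hβ₂ : β₂ = (b₂ : ℂ) - (h : ℂ) * Complex.I)
    (z : ℂ) (hzim : z.im ∉ Set.Icc (-h) 0)
    (hzcirc : ‖z - (((b₁ + b₂) / 2 : ℂ) - ((h / 2 : ℝ) : ℂ) * Complex.I)‖
        ≤ Real.sqrt (((b₂ - b₁) / 2) ^ 2 + (h / 2) ^ 2))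
    (α₁ α₂ : ℂ)
    (hα : (α₁, α₂) = if 0 < z.im then ((b₁ : ℂ) - z, (b₂ : ℂ) - z) else (β₁ - z, β₂ - z))
    (pstar : ℂ)
    (hpstar : pstar = ((‖α₁‖ : ℂ) / α₁ + (‖α₂‖ : ℂ) / α₂) / ((‖α₁‖ : ℂ) + (‖α₂‖ : ℂ))) :
    (⨅ p : ℂ, sSup ((fun l => ‖1 - (l - z) * p‖) '' B)) = ‖α₁ - α₂‖ / (‖α₁‖ + ‖α₂‖) ∧
    sSup ((fun l => ‖1 - (l - z) * pstar‖) '' B) = ‖α₁ - α₂‖ / (‖α₁‖ + ‖α₂‖) := by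
  -- circumcircle condition in real form
  have hR0 : (0:ℝ) ≤ ((b₂-b₁)/2)^2 + (h/2)^2 := by positivity
  have hsq : ‖z - (((b₁ + b₂) / 2 : ℂ) - ((h / 2 : ℝ) : ℂ) * Complex.I)‖^2
      ≤ ((b₂-b₁)/2)^2 + (h/2)^2 := by
    nlinarith [Real.sq_sqrt hR0,
      norm_nonneg (z - (((b₁ + b₂) / 2 : ℂ) - ((h / 2 : ℝ) : ℂ) * Complex.I)), hzcirc]
  have hcen : (((b₁ + b₂) / 2 : ℂ) - ((h / 2 : ℝ) : ℂ) * Complex.I)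
      = (((b₁+b₂)/2 : ℝ):ℂ) - ((h/2:ℝ):ℂ)*Complex.I := by push_cast; ring
  have hn : ‖z - (((b₁ + b₂) / 2 : ℂ) - ((h / 2 : ℝ) : ℂ) * Complex.I)‖^2
      = (z.re - (b₁+b₂)/2)^2 + (z.im + h/2)^2 := by
    rw [hcen, norm_sq_ri]
    simp [Complex.sub_re, Complex.sub_im, Complex.mul_re, Complex.mul_im]
  have hcircR : (b₁ - z.re)*(b₂ - z.re) + z.im^2 + h*z.im ≤ 0 := by
    rw [hn] at hsq; nlinarith [hsq]
  -- compactness of B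
  have hBc : IsCompact B := by
    rw [hB]
    have himg : {w : ℂ | w.re ∈ Set.Icc b₁ b₂ ∧ w.im ∈ Set.Icc (-h) 0}
        = (fun q : ℝ × ℝ => (q.1:ℂ) + (q.2:ℂ)*Complex.I) '' (Set.Icc b₁ b₂ ×ˢ Set.Icc (-h) 0) := by
      ext w
      constructor
      · rintro ⟨h1, h2⟩
        exact ⟨(w.re, w.im), ⟨h1, h2⟩, by simp [Complex.ext_iff]⟩
      · rintro ⟨q, ⟨hq1, hq2⟩, rfl⟩
        constructor
        · simpa using hq1
        · simpa using hq2
    rw [himg]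
    exact (isCompact_Icc.prod isCompact_Icc).image (by continuity)
  by_cases hzpos : 0 < z.im
  · -- z above the rectangle
    rw [if_pos hzpos, Prod.mk.injEq] at hα
    obtain ⟨hA1, hA2⟩ := hα
    have hα₁e : α₁ = ((b₁ - z.re : ℝ):ℂ) - ((z.im:ℝ):ℂ)*Complex.I := by
      rw [hA1]; apply Complex.ext <;> simp
    have hα₂e : α₂ = ((b₂ - z.re : ℝ):ℂ) - ((z.im:ℝ):ℂ)*Complex.I := by
      rw [hA2]; apply Complex.ext <;> simp
    have hα₁0 : α₁ ≠ 0 := by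
      rw [hα₁e]; intro hc
      have := congrArg Complex.im hc
      simp at this; linarith
    have hα₂0 : α₂ ≠ 0 := by
      rw [hα₂e]; intro hc
      have := congrArg Complex.im hc
      simp at this; linarith
    obtain ⟨hbound, he₁, he₂⟩ := core (b₁ - z.re) (b₂ - z.re) z.im h hzpos hh (by linarith)
      (by linarith [hcircR]) α₁ α₂ pstar hα₁e hα₂e hpstar
    have hl₀B : (b₁:ℂ) ∈ B := by
      rw [hB]
      refine ⟨?_, ?_⟩ <;> simp [Set.mem_Icc] <;> linarith
    have hl₀v : ‖1 - ((b₁:ℂ) - z)*pstar‖ = ‖α₁ - α₂‖ / (‖α₁‖ + ‖α₂‖) := by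
      rw [← hA1]; exact he₁
    have hub : ∀ l ∈ B, ‖1 - (l - z)*pstar‖ ≤ ‖α₁ - α₂‖ / (‖α₁‖ + ‖α₂‖) := by
      intro l hl
      rw [hB] at hl
      obtain ⟨⟨h1, h2⟩, ⟨h3, h4⟩⟩ := hl
      refine hbound (l - z) ⟨?_, ?_⟩ ⟨?_, ?_⟩ <;> simp [Complex.sub_re, Complex.sub_im] <;> linarith
    have hlb : ∀ p : ℂ, ∃ l ∈ B, ‖α₁ - α₂‖ / (‖α₁‖ + ‖α₂‖) ≤ ‖1 - (l - z)*p‖ := by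
      intro p
      rcases le_max_iff.mp (lower_two α₁ α₂ p hα₁0 hα₂0) with hc | hc
      · exact ⟨(b₁:ℂ), hl₀B, by rw [← hA1]; exact hc⟩
      · refine ⟨(b₂:ℂ), ?_, by rw [← hA2]; exact hc⟩
        rw [hB]
        refine ⟨?_, ?_⟩ <;> simp [Set.mem_Icc] <;> linarith
    exact assemble B z hBc _ pstar (b₁:ℂ) hl₀B hl₀v hub hlb
  · -- z below the rectangle
    rw [if_neg hzpos, Prod.mk.injEq] at hα
    obtain ⟨hA1, hA2⟩ := hα
    have hzneg : z.im < -h := by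
      rcases lt_or_ge z.im (-h) with hlt | hge
      · exact hlt
      · exact absurd ⟨hge, le_of_not_gt hzpos⟩ hzim
    set y : ℝ := -h - z.im with hydef
    have hy : 0 < y := by simp [hydef]; linarith
    set γ₁ : ℂ := (starRingEnd ℂ) α₁ with hγ₁def
    set γ₂ : ℂ := (starRingEnd ℂ) α₂ with hγ₂def
    have nconj : ∀ w : ℂ, ‖(starRingEnd ℂ) w‖ = ‖w‖ := fun w => by
      rw [Complex.norm_conj]
    have hγ₁e : γ₁ = ((b₁ - z.re : ℝ):ℂ) - ((y:ℝ):ℂ)*Complex.I := by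
      rw [hγ₁def, hA1, hβ₁]
      apply Complex.ext <;> simp [hydef] <;> ring
    have hγ₂e : γ₂ = ((b₂ - z.re : ℝ):ℂ) - ((y:ℝ):ℂ)*Complex.I := by
      rw [hγ₂def, hA2, hβ₂]
      apply Complex.ext <;> simp [hydef] <;> ring
    have hα₁0 : α₁ ≠ 0 := by
      intro hc
      have : γ₁ = 0 := by rw [hγ₁def, hc]; simp
      rw [hγ₁e] at this
      have := congrArg Complex.im this
      simp at this; linarith
    have hα₂0 : α₂ ≠ 0 := by
      intro hc
      have : γ₂ = 0 := by rw [hγ₂def, hc]; simp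
      rw [hγ₂e] at this
      have := congrArg Complex.im this
      simp at this; linarith
    set q : ℂ := (starRingEnd ℂ) pstar with hqdef
    have hq : q = ((‖γ₁‖:ℂ)/γ₁ + (‖γ₂‖:ℂ)/γ₂)/((‖γ₁‖:ℂ)+(‖γ₂‖:ℂ)) := by
      rw [hqdef, hpstar, map_div₀, map_add, map_div₀, map_div₀, map_add]
      rw [hγ₁def, hγ₂def, nconj α₁, nconj α₂]
      simp [Complex.conj_ofReal]
    have hcirc2 : (b₁ - z.re)*(b₂ - z.re) + y^2 + h*y ≤ 0 := by
      have : y^2 + h*y = z.im^2 + h*z.im := by rw [hydef]; ring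
      linarith [hcircR, this]
    obtain ⟨hbound, he₁, he₂⟩ := core (b₁ - z.re) (b₂ - z.re) y h hy hh (by linarith)
      hcirc2 γ₁ γ₂ q hγ₁e hγ₂e hq
    have hnormflip : ∀ w : ℂ, ‖1 - w*pstar‖ = ‖1 - ((starRingEnd ℂ) w)*q‖ := by
      intro w
      rw [hqdef, show (1:ℂ) - ((starRingEnd ℂ) w)*((starRingEnd ℂ) pstar)
        = (starRingEnd ℂ) (1 - w*pstar) by rw [map_sub, map_mul, map_one], nconj]
    have hMeq : ‖γ₁ - γ₂‖ / (‖γ₁‖ + ‖γ₂‖) = ‖α₁ - α₂‖ / (‖α₁‖ + ‖α₂‖) := by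
      rw [hγ₁def, hγ₂def, ← map_sub, nconj, nconj, nconj]
    have hl₀B : β₁ ∈ B := by
      rw [hB, hβ₁]
      refine ⟨?_, ?_⟩ <;> simp [Set.mem_Icc] <;> linarith
    have hl₀v : ‖1 - (β₁ - z)*pstar‖ = ‖α₁ - α₂‖ / (‖α₁‖ + ‖α₂‖) := by
      rw [← hA1, hnormflip α₁, ← hγ₁def, he₁, hMeq]
    have hub : ∀ l ∈ B, ‖1 - (l - z)*pstar‖ ≤ ‖α₁ - α₂‖ / (‖α₁‖ + ‖α₂‖) := by
      intro l hl
      rw [hB] at hl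
      obtain ⟨⟨h1, h2⟩, ⟨h3, h4⟩⟩ := hl
      rw [hnormflip (l - z), ← hMeq]
      refine hbound ((starRingEnd ℂ) (l - z)) ⟨?_, ?_⟩ ⟨?_, ?_⟩ <;>
        simp [Complex.sub_re, Complex.sub_im, hydef] <;> linarith
    have hlb : ∀ p : ℂ, ∃ l ∈ B, ‖α₁ - α₂‖ / (‖α₁‖ + ‖α₂‖) ≤ ‖1 - (l - z)*p‖ := by
      intro p
      rcases le_max_iff.mp (lower_two α₁ α₂ p hα₁0 hα₂0) with hc | hc
      · exact ⟨β₁, hl₀B, by rw [← hA1]; exact hc⟩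
      · refine ⟨β₂, ?_, by rw [← hA2]; exact hc⟩
        rw [hB, hβ₂]
        refine ⟨?_, ?_⟩ <;> simp [Set.mem_Icc] <;> linarith
    exact assemble B z hBc _ pstar β₁ hl₀B hl₀v hub hlb
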